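/- Let (Ω,μ) be an infinite measure space and E ⊂ L¹+L^∞ a symmetric Banach function space. Then E ⊆ R_μ := {f ∈ L¹+L^∞ : μ_t(f) → 0 as t→∞} if and only if the constant function 1 does not belong to E. -/

import Mathlib

open MeasureTheory Filter
open scoped ENNReal

variable {α : Type*}

/-- Non-increasing rearrangement `μ_t(f) = inf{λ>0 : μ{|f|>λ} ≤ t}`. -/
noncomputable def rearr [MeasurableSpace α] (μ : Measure α) (f : α → ℝ) (t : ℝ) : ℝ :=
  sInf {l : ℝ | 0 < l ∧ μ {x | l < |f x|} ≤ ENNReal.ofReal t}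

/-- Membership in `L¹ + L^∞`. -/
def MemL1pLinf [MeasurableSpace α] (μ : Measure α) (f : α → ℝ) : Prop :=
  ∃ g h : α → ℝ, f = g + h ∧ Integrable g μ ∧ MemLp h ⊤ μ

/-- Membership in `R_μ = {f ∈ L¹+L^∞ : μ_t(f) → 0 as t → ∞}`. -/
def MemR [MeasurableSpace α] (μ : Measure α) (f : α → ℝ) : Prop :=
  MemL1pLinf μ f ∧ Tendsto (rearr μ f) atTop (nhds 0)

/-- A symmetric Banach function space. -/
structure SymmetricSpace [MeasurableSpace α] (μ : Measure α) where
  carrier : Set (α → ℝ)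
  norm' : (α → ℝ) → ℝ
  subset_L1pLinf : ∀ f ∈ carrier, MemL1pLinf μ f
  smul_mem : ∀ (c : ℝ), ∀ f ∈ carrier, c • f ∈ carrier
  symm : ∀ f ∈ carrier, ∀ g : α → ℝ, MemL1pLinf μ g →
    (∀ t > 0, rearr μ g t ≤ rearr μ f t) → g ∈ carrier ∧ norm' g ≤ norm' f

lemma rearr_nonneg [MeasurableSpace α] (μ : Measure α) (f : α → ℝ) (t : ℝ) :
    0 ≤ rearr μ f t :=
  Real.sInf_nonneg (fun _ hl => hl.1.le)

lemma rearr_const_one [MeasurableSpace α] (μ : Measure α) (hμ : μ Set.univ = ∞) (t : ℝ) :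
    rearr μ (fun _ => (1:ℝ)) t = 1 := by
  have hset : {l : ℝ | 0 < l ∧ μ {x | l < |(1:ℝ)|} ≤ ENNReal.ofReal t} = Set.Ici 1 := by
    ext l
    simp only [Set.mem_setOf_eq, Set.mem_Ici, abs_one]
    constructor
    · rintro ⟨hl, hμl⟩
      by_contra hl1
      push_neg at hl1
      have : {x : α | l < 1} = Set.univ := by
        ext x; simp [hl1]
      rw [this, hμ] at hμl
      exact absurd (lt_of_le_of_lt hμl ENNReal.ofReal_lt_top) (lt_irrefl _)
    · intro h1
      refine ⟨lt_of_lt_of_le one_pos h1, ?_⟩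
      have : {x : α | l < 1} = ∅ := by
        ext x; simp; linarith
      simp [this]
  rw [rearr, hset, csInf_Ici]

/-- For `t > 0`, the defining set of `rearr` is nonempty when `f ∈ L¹+L^∞`. -/
lemma rearr_set_nonempty [MeasurableSpace α] (μ : Measure α) {f : α → ℝ}
    (hf : MemL1pLinf μ f) {t : ℝ} (ht : 0 < t) :
    {l : ℝ | 0 < l ∧ μ {x | l < |f x|} ≤ ENNReal.ofReal t}.Nonempty := by
  obtain ⟨g, h, hfgh, hg, hh⟩ := hf
  set C : ℝ≥0∞ := eLpNormEssSup h μ with hC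
  have hCfin : C < ∞ := by
    have := hh.2
    rwa [eLpNorm_exponent_top] at this
  set Cr : ℝ := C.toReal
  set I : ℝ≥0∞ := ∫⁻ a, ‖g a‖₊ ∂μ with hI
  have hIfin : I < ∞ := hg.2
  -- choose n with I / ofReal t < n
  obtain ⟨n, hn⟩ := ENNReal.exists_nat_gt (show I / ENNReal.ofReal t ≠ ∞ from
    (ENNReal.div_lt_top hIfin.ne ((ENNReal.ofReal_pos.mpr ht).ne')).ne)
  have hn0 : (n : ℝ≥0∞) ≠ 0 := by
    intro h0
    rw [h0] at hn
    exact absurd hn (by simp)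
  have hn0' : 0 < (n : ℝ) := by
    have : n ≠ 0 := by exact_mod_cast fun h0 => hn0 (by exact_mod_cast h0)
    positivity
  refine ⟨Cr + n + 1, ⟨by positivity, ?_⟩⟩
  -- a.e. bound |h x| ≤ Cr
  have hae : ∀ᵐ x ∂μ, |h x| ≤ Cr := by
    filter_upwards [ae_le_eLpNormEssSup (f := h) (μ := μ)] with x hx
    have : (‖h x‖₊ : ℝ≥0∞) ≤ C := hx
    calc |h x| = ((‖h x‖₊ : ℝ≥0∞)).toReal := by simp [Real.norm_eq_abs]
      _ ≤ Cr := ENNReal.toReal_mono hCfin.ne this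
  -- set inclusion a.e.
  have hsub : μ {x | Cr + n + 1 < |f x|} ≤ μ {x | (n : ℝ≥0∞) ≤ ‖g x‖₊} := by
    apply measure_mono_ae
    filter_upwards [hae] with x hx hmem
    have hfx : |f x| ≤ |g x| + Cr := by
      rw [hfgh]
      calc |g x + h x| ≤ |g x| + |h x| := abs_add_le _ _
        _ ≤ |g x| + Cr := by linarith
    have hmem' : Cr + (n:ℝ) + 1 < |f x| := hmem
    have : (n : ℝ) < |g x| := by linarith
    show (n : ℝ≥0∞) ≤ ‖g x‖₊
    rw [← enorm_eq_nnnorm, ← ofReal_norm, ← ENNReal.ofReal_natCast]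
    exact ENNReal.ofReal_le_ofReal (by rw [Real.norm_eq_abs]; linarith)
  refine hsub.trans ?_
  have hmarkov : μ {x | (n : ℝ≥0∞) ≤ ‖g x‖₊} ≤ I / n :=
    meas_ge_le_lintegral_div (by exact hg.1.aemeasurable.nnnorm.coe_nnreal_ennreal)
      hn0 (by simp)
  refine hmarkov.trans ?_
  have hIlt : I < n * ENNReal.ofReal t := by
    rwa [ENNReal.div_lt_iff (Or.inl (ENNReal.ofReal_pos.mpr ht).ne')
      (Or.inl ENNReal.ofReal_ne_top)] at hn
  exact ENNReal.div_le_of_le_mul (by rw [mul_comm] at hIlt; exact hIlt.le)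

/-- `rearr` is antitone on positive `t` as long as the small-`t` set is nonempty. -/
lemma rearr_antitone [MeasurableSpace α] (μ : Measure α) {f : α → ℝ}
    (hf : MemL1pLinf μ f) {t s : ℝ} (ht : 0 < t) (hts : t ≤ s) :
    rearr μ f s ≤ rearr μ f t := by
  apply csInf_le_csInf
  · exact ⟨0, fun l hl => hl.1.le⟩
  · exact rearr_set_nonempty μ hf ht
  · intro l hl
    exact ⟨hl.1, hl.2.trans (ENNReal.ofReal_le_ofReal hts)⟩

/-- For an infinite measure space, a symmetric space `E` is contained in `R_μ`
iff the constant function `1` does not belong to `E`. -/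
theorem stmt1 [MeasurableSpace α] (μ : Measure α) (hμ : μ Set.univ = ∞)
    (E : SymmetricSpace μ) :
    (∀ f ∈ E.carrier, MemR μ f) ↔ (fun _ => (1:ℝ)) ∉ E.carrier := by
  constructor
  · intro hE h1
    have := (hE _ h1).2
    have heq : rearr μ (fun _ => (1:ℝ)) = fun _ => (1:ℝ) :=
      funext fun t => rearr_const_one μ hμ t
    rw [heq] at this
    exact one_ne_zero (tendsto_nhds_unique tendsto_const_nhds this)
  · intro h1 f hf
    have hfL : MemL1pLinf μ f := E.subset_L1pLinf f hf
    refine ⟨hfL, ?_⟩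
    by_contra hnt
    -- extract ε > 0 with rearr μ f t ≥ ε frequently at top
    rw [Metric.tendsto_atTop] at hnt
    push_neg at hnt
    obtain ⟨ε, hε, hfreq⟩ := hnt
    -- then rearr μ f t ≥ ε for all t > 0
    have hlow : ∀ t > 0, ε ≤ rearr μ f t := by
      intro t ht
      obtain ⟨s, hs, hεs⟩ := hfreq t
      have h0s : 0 ≤ rearr μ f s := rearr_nonneg μ f s
      rw [Real.dist_eq, sub_zero, abs_of_nonneg h0s] at hεs
      exact hεs.trans (rearr_antitone μ hfL ht hs)
    -- the constant function ε has rearr ≤ ε ≤ rearr f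
    have hconst : ∀ t > 0, rearr μ (fun _ => ε) t ≤ rearr μ f t := by
      intro t ht
      refine le_trans ?_ (hlow t ht)
      apply csInf_le ⟨0, fun l hl => hl.1.le⟩
      refine ⟨hε, ?_⟩
      have : {x : α | ε < |ε|} = ∅ := by
        ext x; simp [abs_of_pos hε]
      simp [this]
    have hconstL : MemL1pLinf μ (fun _ => ε) :=
      ⟨0, fun _ => ε, by simp, integrable_zero _ _ _, memLp_top_const ε⟩
    have hmem : (fun _ : α => ε) ∈ E.carrier := (E.symm f hf _ hconstL hconst).1
    have : (ε⁻¹ • fun _ : α => ε) ∈ E.carrier := E.smul_mem ε⁻¹ _ hmem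
    have heq : (ε⁻¹ • fun _ : α => ε) = fun _ : α => (1:ℝ) := by
      funext x
      simp [Pi.smul_apply, smul_eq_mul, inv_mul_cancel₀ hε.ne']
    rw [heq] at this
    exact h1 this
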